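/- Let G ∈ 𝕆^{n×k} with tr(GᵀD) ≠ 0 satisfy the first-order conditions GᵀD = DᵀG and A G − ξ(G) D = G M(G). If for every nonzero real n×k matrix H satisfying HᵀG = −GᵀH the strict inequality tr(DᵀH)² < η(G)·(tr(HᵀAH) − tr(H M(G) Hᵀ)) holds, then G is a local maximizer of η on 𝕆^{n×k}. -/

import Mathlib

open Matrix

/-- The objective `η(G) = tr(GᵀD)² / tr(GᵀAG)`. -/
noncomputable def eta {n k : ℕ} (A : Matrix (Fin n) (Fin n) ℝ)
    (D G : Matrix (Fin n) (Fin k) ℝ) : ℝ :=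
  (Matrix.trace (Gᵀ * D)) ^ 2 / Matrix.trace (Gᵀ * A * G)

/-- `ξ(G) = tr(GᵀAG) / tr(GᵀD)`. -/
noncomputable def xi {n k : ℕ} (A : Matrix (Fin n) (Fin n) ℝ)
    (D G : Matrix (Fin n) (Fin k) ℝ) : ℝ :=
  Matrix.trace (Gᵀ * A * G) / Matrix.trace (Gᵀ * D)

/-- `sym(B) = (B + Bᵀ)/2`. -/
noncomputable def symPart {k : ℕ} (B : Matrix (Fin k) (Fin k) ℝ) : Matrix (Fin k) (Fin k) ℝ :=
  (1 / 2 : ℝ) • (B + Bᵀ)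

/-- `M(G) = sym(GᵀAG − ξ(G)·GᵀD)`. -/
noncomputable def Mmat {n k : ℕ} (A : Matrix (Fin n) (Fin n) ℝ)
    (D G : Matrix (Fin n) (Fin k) ℝ) : Matrix (Fin k) (Fin k) ℝ :=
  symPart (Gᵀ * A * G - xi A D G • (Gᵀ * D))

/-- `E(G) = A − ξ(G)·(DGᵀ + GDᵀ)`. -/
noncomputable def Emat {n k : ℕ} (A : Matrix (Fin n) (Fin n) ℝ)
    (D G : Matrix (Fin n) (Fin k) ℝ) : Matrix (Fin n) (Fin n) ℝ :=
  A - xi A D G • (D * Gᵀ + G * Dᵀ)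

/-- The Frobenius norm of a real matrix. -/
noncomputable def frobNorm {n k : ℕ} (M : Matrix (Fin n) (Fin k) ℝ) : ℝ :=
  Real.sqrt (∑ i, ∑ j, (M i j) ^ 2)

/-- `G` is a local maximizer of `η` on the Stiefel manifold `𝕆^{n×k}`. -/
def IsLocalMaxEta {n k : ℕ} (A : Matrix (Fin n) (Fin n) ℝ)
    (D G : Matrix (Fin n) (Fin k) ℝ) : Prop :=
  Gᵀ * G = 1 ∧ ∃ ε > (0 : ℝ), ∀ G' : Matrix (Fin n) (Fin k) ℝ,
    G'ᵀ * G' = 1 → frobNorm (G' - G) < ε → eta A D G' ≤ eta A D G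

/- ### Auxiliary lemmas -/

lemma trace_pos_of_orth {n k : ℕ} (hk : 0 < k) {A : Matrix (Fin n) (Fin n) ℝ}
    (hA : A.PosDef) {G : Matrix (Fin n) (Fin k) ℝ} (hG : Gᵀ * G = 1) :
    0 < Matrix.trace (Gᵀ * A * G) := by
  have hdiag : ∀ j, (Gᵀ * A * G) j j = (fun i => G i j) ⬝ᵥ A *ᵥ (fun i => G i j) := by
    intro j
    simp only [Matrix.mul_apply, dotProduct, Matrix.mulVec, Matrix.transpose_apply,
      Finset.sum_mul, Finset.mul_sum]
    rw [Finset.sum_comm]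
    apply Finset.sum_congr rfl; intro i _
    apply Finset.sum_congr rfl; intro l _
    ring
  have hGG : ∀ j, (fun i => G i j) ⬝ᵥ (fun i => G i j) = 1 := by
    intro j
    have := congrFun (congrFun hG j) j
    simpa [Matrix.mul_apply, dotProduct, Matrix.one_apply] using this
  have hcolne : ∀ j, (fun i => G i j) ≠ 0 := by
    intro j h
    have := hGG j
    rw [h] at this
    simp [dotProduct] at this
  rw [Matrix.trace]
  apply Finset.sum_pos'
  · intro j _
    rw [Matrix.diag, hdiag j]
    simpa using hA.posSemidef.dotProduct_mulVec_nonneg (fun i => G i j)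
  · refine ⟨⟨0, hk⟩, Finset.mem_univ _, ?_⟩
    rw [Matrix.diag, hdiag _]
    simpa using hA.dotProduct_mulVec_pos (hcolne ⟨0, hk⟩)

lemma sumsq_nonneg {n k : ℕ} (M : Matrix (Fin n) (Fin k) ℝ) :
    0 ≤ ∑ i, ∑ j, (M i j) ^ 2 :=
  Finset.sum_nonneg fun _ _ => Finset.sum_nonneg fun _ _ => sq_nonneg _

lemma sumsq_pos {n k : ℕ} {M : Matrix (Fin n) (Fin k) ℝ} (h : M ≠ 0) :
    0 < ∑ i, ∑ j, (M i j) ^ 2 := by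
  rcases (sumsq_nonneg M).lt_or_eq with h1 | h1
  · exact h1
  exfalso; apply h
  have h1 := h1.symm
  rw [Finset.sum_eq_zero_iff_of_nonneg
    (fun i _ => Finset.sum_nonneg fun j _ => sq_nonneg (M i j))] at h1
  ext i j
  have h2 := h1 i (Finset.mem_univ i)
  rw [Finset.sum_eq_zero_iff_of_nonneg (fun j _ => sq_nonneg (M i j))] at h2
  have h3 := h2 j (Finset.mem_univ j)
  simpa using pow_eq_zero_iff (two_ne_zero) |>.mp h3

lemma frobNorm_pos {n k : ℕ} {M : Matrix (Fin n) (Fin k) ℝ} (h : M ≠ 0) :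
    0 < frobNorm M := Real.sqrt_pos.mpr (sumsq_pos h)

lemma frobNorm_smul {n k : ℕ} (c : ℝ) (M : Matrix (Fin n) (Fin k) ℝ) :
    frobNorm (c • M) = |c| * frobNorm M := by
  unfold frobNorm
  rw [← Real.sqrt_sq_eq_abs, ← Real.sqrt_mul (sq_nonneg c)]
  congr 1
  rw [Finset.mul_sum]
  apply Finset.sum_congr rfl; intro i _
  rw [Finset.mul_sum]
  apply Finset.sum_congr rfl; intro j _
  simp [mul_pow]

lemma continuous_frobNorm {n k : ℕ} : Continuous (frobNorm (n := n) (k := k)) := by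
  unfold frobNorm
  refine Real.continuous_sqrt.comp ?_
  refine continuous_finset_sum _ fun i _ => continuous_finset_sum _ fun j _ => ?_
  exact (continuous_apply_apply i j).pow 2

lemma isCompact_frobSphere {n k : ℕ} :
    IsCompact {M : Matrix (Fin n) (Fin k) ℝ | frobNorm M = 1} := by
  have hK : IsCompact (Set.univ.pi fun _ : Fin n =>
      Set.univ.pi fun _ : Fin k => Set.Icc (-1 : ℝ) 1) :=
    isCompact_univ_pi fun _ => isCompact_univ_pi fun _ => isCompact_Icc
  apply hK.of_isClosed_subset
  · exact isClosed_eq continuous_frobNorm continuous_const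
  · intro M hM
    intro i _
    intro j _
    have hsum : ∑ i, ∑ j, (M i j) ^ 2 = 1 := by
      have := hM
      simp only [Set.mem_setOf_eq, frobNorm] at this
      exact Real.sqrt_eq_one.mp this
    have hle : (M i j) ^ 2 ≤ 1 := by
      rw [← hsum]
      calc (M i j)^2 ≤ ∑ j', (M i j')^2 :=
            Finset.single_le_sum (fun j' _ => sq_nonneg (M i j')) (Finset.mem_univ j)
        _ ≤ ∑ i', ∑ j', (M i' j')^2 :=
            Finset.single_le_sum (f := fun i' => ∑ j', (M i' j')^2)
              (fun i' _ => Finset.sum_nonneg fun j' _ => sq_nonneg _) (Finset.mem_univ i)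
    constructor <;> nlinarith

lemma Mmat_transpose {n k : ℕ} (A : Matrix (Fin n) (Fin n) ℝ)
    (D G : Matrix (Fin n) (Fin k) ℝ) : (Mmat A D G)ᵀ = Mmat A D G := by
  unfold Mmat symPart
  rw [Matrix.transpose_smul, Matrix.transpose_add, Matrix.transpose_transpose, add_comm]

lemma core_identity {n k : ℕ} (A : Matrix (Fin n) (Fin n) ℝ) (hAT : Aᵀ = A)
    (D G : Matrix (Fin n) (Fin k) ℝ)
    (htr : Matrix.trace (Gᵀ * D) ≠ 0)
    (hq : Matrix.trace (Gᵀ * A * G) ≠ 0)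
    (hfo2 : A * G - xi A D G • D = G * Mmat A D G)
    (H : Matrix (Fin n) (Fin k) ℝ)
    (hcon : Gᵀ * H + Hᵀ * G + Hᵀ * H = 0) :
    (Matrix.trace (Gᵀ * D))^2 * Matrix.trace ((G + H)ᵀ * A * (G + H))
      - (Matrix.trace ((G + H)ᵀ * D))^2 * Matrix.trace (Gᵀ * A * G)
    = Matrix.trace (Gᵀ * A * G) *
        (eta A D G * (Matrix.trace (Hᵀ * A * H) - Matrix.trace (H * Mmat A D G * Hᵀ))
          - (Matrix.trace (Dᵀ * H))^2) := by
  have hτ : Matrix.trace (Dᵀ * H) = Matrix.trace (Hᵀ * D) := by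
    rw [← Matrix.trace_transpose (Dᵀ * H), Matrix.transpose_mul, Matrix.transpose_transpose]
  set t := Matrix.trace (Gᵀ * D) with ht
  set q := Matrix.trace (Gᵀ * A * G) with hqdef
  set M := Mmat A D G with hM
  set ξ := xi A D G with hξ
  set τ := Matrix.trace (Hᵀ * D) with hτdef
  set a := Matrix.trace (Hᵀ * A * H) with ha
  set m := Matrix.trace (H * M * Hᵀ) with hm
  set s := Matrix.trace (Hᵀ * (G * M)) with hs
  have hMT : Mᵀ = M := Mmat_transpose A D G
  have e1 : Matrix.trace ((G + H)ᵀ * D) = t + τ := by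
    rw [Matrix.transpose_add, Matrix.add_mul, Matrix.trace_add]
  have hsymtr : Matrix.trace (Gᵀ * A * H) = Matrix.trace (Hᵀ * A * G) := by
    rw [← Matrix.trace_transpose (Gᵀ * A * H)]
    simp [Matrix.transpose_mul, hAT, Matrix.mul_assoc]
  have e3 : Matrix.trace (Hᵀ * A * G) = ξ * τ + s := by
    have hAG : A * G = G * M + ξ • D := by
      rw [← hfo2]; abel
    rw [Matrix.mul_assoc, hAG, Matrix.mul_add, Matrix.trace_add, Matrix.mul_smul,
      Matrix.trace_smul, smul_eq_mul]
    ring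
  have e2 : Matrix.trace ((G + H)ᵀ * A * (G + H)) = q + 2 * (ξ * τ + s) + a := by
    rw [Matrix.transpose_add, Matrix.add_mul, Matrix.add_mul, Matrix.mul_add, Matrix.mul_add,
      Matrix.trace_add, Matrix.trace_add, Matrix.trace_add, hsymtr, e3]
    ring
  have hcon' : Hᵀ * G + Gᵀ * H = -(Hᵀ * H) := by
    have h5 : Hᵀ * G + Gᵀ * H + Hᵀ * H = 0 := by rw [← hcon]; abel
    exact eq_neg_of_add_eq_zero_left h5
  have e4 : 2 * s = -m := by
    have h1 : s = Matrix.trace ((Hᵀ * G) * M) := by rw [hs, Matrix.mul_assoc]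
    have h2 : Matrix.trace ((Hᵀ * G) * M) = Matrix.trace ((Gᵀ * H) * M) := by
      rw [← Matrix.trace_transpose ((Hᵀ * G) * M), Matrix.transpose_mul, Matrix.transpose_mul,
        Matrix.transpose_transpose, hMT, Matrix.trace_mul_comm]
    have h3 : m = Matrix.trace ((Hᵀ * H) * M) := by
      rw [hm, Matrix.trace_mul_comm, ← Matrix.mul_assoc]
    calc 2 * s = Matrix.trace ((Hᵀ * G) * M) + Matrix.trace ((Gᵀ * H) * M) := by
          rw [← h1, ← h2, ← h1]; ring
      _ = Matrix.trace ((Hᵀ * G + Gᵀ * H) * M) := by rw [Matrix.add_mul, Matrix.trace_add]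
      _ = - Matrix.trace ((Hᵀ * H) * M) := by rw [hcon', Matrix.neg_mul, Matrix.trace_neg]
      _ = -m := by rw [h3]
  have e5 : t * ξ = q := by
    rw [hξ, xi, ← ht, ← hqdef]
    field_simp
  have heta : eta A D G = t^2 / q := rfl
  rw [hτ, e1, e2, heta]
  have main : t^2 * (q + 2*(ξ*τ + s) + a) - (t+τ)^2*q = t^2*(a-m) - q*τ^2 := by
    linear_combination (2*t*τ) * e5 + t^2 * e4
  rw [main]
  field_simp

theorem localMax_of_secondOrder_sufficient
    (n k : ℕ) (hk1 : 1 ≤ k) (hkn : k < n)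
    (A : Matrix (Fin n) (Fin n) ℝ) (hA : A.PosDef)
    (D : Matrix (Fin n) (Fin k) ℝ)
    (G : Matrix (Fin n) (Fin k) ℝ) (hG : Gᵀ * G = 1)
    (htr : Matrix.trace (Gᵀ * D) ≠ 0)
    (hfo1 : Gᵀ * D = Dᵀ * G)
    (hfo2 : A * G - xi A D G • D = G * Mmat A D G)
    (hso : ∀ H : Matrix (Fin n) (Fin k) ℝ, H ≠ 0 → Hᵀ * G = -(Gᵀ * H) →
      (Matrix.trace (Dᵀ * H)) ^ 2 <
        eta A D G *
          (Matrix.trace (Hᵀ * A * H) - Matrix.trace (H * Mmat A D G * Hᵀ))) :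
    IsLocalMaxEta A D G := by
  classical
  have hAT : Aᵀ = A := by simpa using hA.1.symm ▸ hA.1
  have hqpos : 0 < Matrix.trace (Gᵀ * A * G) := trace_pos_of_orth hk1 hA hG
  set M := Mmat A D G with hMdef
  set Qf : Matrix (Fin n) (Fin k) ℝ → ℝ := fun H =>
    eta A D G * (Matrix.trace (Hᵀ * A * H) - Matrix.trace (H * M * Hᵀ))
      - (Matrix.trace (Dᵀ * H))^2 with hQf
  refine ⟨hG, ?_⟩
  by_contra hcontra
  push_neg at hcontra
  have hseq : ∀ N : ℕ, ∃ H : Matrix (Fin n) (Fin k) ℝ,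
      (Gᵀ * H + Hᵀ * G + Hᵀ * H = 0) ∧ frobNorm H < 1/(N+1) ∧ Qf H < 0 := by
    intro N
    obtain ⟨G', hG', hnear, hlt⟩ := hcontra (1/(N+1)) (by positivity)
    have hGH : G + (G' - G) = G' := by abel
    have hcon : Gᵀ * (G' - G) + (G' - G)ᵀ * G + (G' - G)ᵀ * (G' - G) = 0 := by
      have expand : Gᵀ * (G' - G) + (G' - G)ᵀ * G + (G' - G)ᵀ * (G' - G)
          = G'ᵀ * G' - Gᵀ * G := by
        simp only [Matrix.transpose_sub, Matrix.sub_mul, Matrix.mul_sub]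
        abel
      rw [expand, hG', hG, sub_self]
    refine ⟨G' - G, hcon, hnear, ?_⟩
    have hq' : 0 < Matrix.trace (G'ᵀ * A * G') := trace_pos_of_orth hk1 hA hG'
    have hkey := core_identity A hAT D G htr hqpos.ne' hfo2 (G' - G) hcon
    rw [hGH] at hkey
    have hdiv : (Matrix.trace (Gᵀ * D))^2 / Matrix.trace (Gᵀ * A * G)
        < (Matrix.trace (G'ᵀ * D))^2 / Matrix.trace (G'ᵀ * A * G') := hlt
    rw [div_lt_div_iff₀ hqpos hq'] at hdiv
    simp only [hQf]
    nlinarith [hkey, hdiv, hqpos]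
  choose Hs hcon hsmall hQneg using hseq
  have hQ0 : Qf 0 = 0 := by simp [hQf]
  have hHne : ∀ N, Hs N ≠ 0 := by
    intro N h
    have := hQneg N
    rw [h, hQ0] at this
    exact lt_irrefl _ this
  set r : ℕ → ℝ := fun N => frobNorm (Hs N) with hrdef
  have hr : ∀ N, 0 < r N := fun N => frobNorm_pos (hHne N)
  set u : ℕ → Matrix (Fin n) (Fin k) ℝ := fun N => (r N)⁻¹ • Hs N with hudef
  have hHu : ∀ N, Hs N = r N • u N := by
    intro N
    rw [hudef]
    simp only
    rw [smul_inv_smul₀ (hr N).ne']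
  have hu1 : ∀ N, frobNorm (u N) = 1 := by
    intro N
    rw [hudef]
    simp only
    rw [frobNorm_smul, abs_inv, abs_of_pos (hr N), inv_mul_cancel₀ (hr N).ne']
  have Qscale : ∀ (c : ℝ) (H : Matrix (Fin n) (Fin k) ℝ), Qf (c • H) = c^2 * Qf H := by
    intro c H
    simp only [hQf, Matrix.transpose_smul, Matrix.smul_mul, Matrix.mul_smul,
      Matrix.trace_smul, smul_eq_mul]
    ring
  have hQu : ∀ N, Qf (u N) < 0 := by
    intro N
    have h := hQneg N
    rw [hHu N, Qscale] at h
    nlinarith [pow_pos (hr N) 2]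
  have hconu : ∀ N, Gᵀ * u N + (u N)ᵀ * G + r N • ((u N)ᵀ * u N) = 0 := by
    intro N
    have h := hcon N
    rw [hHu N] at h
    have h2 : r N • (Gᵀ * u N + (u N)ᵀ * G + r N • ((u N)ᵀ * u N)) = 0 := by
      rw [← h]
      simp only [Matrix.mul_smul, Matrix.smul_mul, Matrix.transpose_smul, smul_add, smul_smul]
    rcases smul_eq_zero.mp h2 with h3 | h3
    · exact absurd h3 (hr N).ne'
    · exact h3
  letI : FirstCountableTopology (Matrix (Fin n) (Fin k) ℝ) :=
    inferInstanceAs (FirstCountableTopology (Fin n → Fin k → ℝ))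
  obtain ⟨x, hx, φ, hφ, hlim⟩ := isCompact_frobSphere.tendsto_subseq
    (fun N => (hu1 N : u N ∈ {M : Matrix (Fin n) (Fin k) ℝ | frobNorm M = 1}))
  have hr0 : Filter.Tendsto r Filter.atTop (nhds 0) := by
    apply squeeze_zero (fun N => (hr N).le) (fun N => (hsmall N).le)
    exact tendsto_one_div_add_atTop_nhds_zero_nat
  have hrφ : Filter.Tendsto (r ∘ φ) Filter.atTop (nhds 0) := hr0.comp hφ.tendsto_atTop
  have hCc : Continuous fun X : Matrix (Fin n) (Fin k) ℝ => Xᵀ * X :=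
    Continuous.matrix_mul (continuous_id.matrix_transpose) continuous_id
  have hLc : Continuous fun X : Matrix (Fin n) (Fin k) ℝ => Gᵀ * X + Xᵀ * G :=
    (Continuous.matrix_mul continuous_const continuous_id).add
      (Continuous.matrix_mul (continuous_id.matrix_transpose) continuous_const)
  have hlim1 : Filter.Tendsto (fun N => Gᵀ * (u (φ N)) + (u (φ N))ᵀ * G
        + r (φ N) • ((u (φ N))ᵀ * (u (φ N)))) Filter.atTop
      (nhds ((Gᵀ * x + xᵀ * G) + (0 : ℝ) • (xᵀ * x))) := by
    exact ((hLc.tendsto x).comp hlim).add (hrφ.smul ((hCc.tendsto x).comp hlim))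
  have hlim2 : Filter.Tendsto (fun N => Gᵀ * (u (φ N)) + (u (φ N))ᵀ * G
        + r (φ N) • ((u (φ N))ᵀ * (u (φ N)))) Filter.atTop (nhds 0) := by
    have : (fun N => Gᵀ * (u (φ N)) + (u (φ N))ᵀ * G
        + r (φ N) • ((u (φ N))ᵀ * (u (φ N)))) = fun _ => (0 : Matrix (Fin k) (Fin k) ℝ) :=
      funext fun N => hconu (φ N)
    rw [this]
    exact tendsto_const_nhds
  have hzero : Gᵀ * x + xᵀ * G + (0 : ℝ) • (xᵀ * x) = 0 :=
    tendsto_nhds_unique hlim1 hlim2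
  have htan : xᵀ * G = -(Gᵀ * x) := by
    rw [zero_smul, add_zero] at hzero
    have h5 : xᵀ * G + Gᵀ * x = 0 := by rw [← hzero]; abel
    exact eq_neg_of_add_eq_zero_left h5
  have hQc : Continuous Qf := by
    rw [hQf]
    have h1 : Continuous fun X : Matrix (Fin n) (Fin k) ℝ => Matrix.trace (Xᵀ * A * X) :=
      Continuous.matrix_trace
        ((Continuous.matrix_mul (continuous_id.matrix_transpose) continuous_const).matrix_mul
          continuous_id)
    have h2 : Continuous fun X : Matrix (Fin n) (Fin k) ℝ => Matrix.trace (X * M * Xᵀ) :=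
      Continuous.matrix_trace
        ((Continuous.matrix_mul continuous_id continuous_const).matrix_mul
          (continuous_id.matrix_transpose))
    have h3 : Continuous fun X : Matrix (Fin n) (Fin k) ℝ => Matrix.trace (Dᵀ * X) :=
      Continuous.matrix_trace (Continuous.matrix_mul continuous_const continuous_id)
    exact (continuous_const.mul (h1.sub h2)).sub (h3.pow 2)
  have hQx : Qf x ≤ 0 := by
    have hQlim : Filter.Tendsto (fun N => Qf (u (φ N))) Filter.atTop (nhds (Qf x)) :=
      (hQc.tendsto x).comp hlim
    exact le_of_tendsto hQlim (Filter.Eventually.of_forall fun N => (hQu (φ N)).le)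
  have hxne : x ≠ 0 := by
    intro h
    have : frobNorm x = 1 := hx
    rw [h] at this
    simp [frobNorm] at this
  have := hso x hxne htan
  have hQxpos : 0 < Qf x := by
    simp only [hQf]
    linarith
  linarith
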